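/- For every alphabet size k ≥ 2 and every pattern shape (m,n) with m ≥ 2, n ≥ 2, there exists an (m, M(k^n, m); m, n)_k-sub-perfect map, i.e., a cyclic m × M(k^n,m) array over a k-letter alphabet in which every (m,n)-pattern occurs at most once; this map contains every row-aperiodic (m,n)-pattern exactly once and is of maximal width among sub-perfect maps of height m. -/

import Mathlib

open Finset

/-- The necklace number `M(q,m) = (1/m) · Σ_{d ∣ m} μ(m/d) q^d` as a natural number. -/
noncomputable def necklaceNat (q m : ℕ) : ℕ :=
  ((∑ d ∈ m.divisors, ArithmeticFunction.moebius (m / d) * (q : ℤ) ^ d) / m).toNat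

/-- Vertical cyclic rotation of a pattern of shape `(m,n)` by `r` rows. -/
def vrot {m n k : ℕ} (r : Fin m) (P : Fin m → Fin n → Fin k) : Fin m → Fin n → Fin k :=
  fun i => P (i + r)

/-- A pattern is row-aperiodic if no nontrivial vertical rotation fixes it. -/
def RowAperiodic {m n k : ℕ} (P : Fin m → Fin n → Fin k) : Prop :=
  ∀ r : Fin m, (r : ℕ) ≠ 0 → vrot r P ≠ P

/-- `A` is a cyclic `M × N` array in which every `(m,n)`-pattern occurs at most once. -/
def IsSubPerfectMap (M N m n : ℕ) {α : Type*} (A : ZMod M → ZMod N → α) : Prop :=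
  ∀ p q : ZMod M × ZMod N,
    (∀ (a : Fin m) (b : Fin n),
        A (p.1 + (a : ℕ)) (p.2 + (b : ℕ)) = A (q.1 + (a : ℕ)) (q.2 + (b : ℕ))) → p = q

namespace DBR

variable {α : Type*}

/-- rotation of a cyclic word by `t`. -/
def rotw {ℓ : ℕ} (t : ZMod ℓ) (w : ZMod ℓ → α) : ZMod ℓ → α := fun i => w (i + t)

lemma rotw_zero {ℓ : ℕ} (w : ZMod ℓ → α) : rotw 0 w = w := by
  funext i; simp [rotw]

lemma rotw_rotw {ℓ : ℕ} (s t : ZMod ℓ) (w : ZMod ℓ → α) :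
    rotw s (rotw t w) = rotw (s + t) w := by
  funext i; simp [rotw, add_assoc]

/-- `t` is a (nat) period of `w`. -/
def IsPer {ℓ : ℕ} (t : ℕ) (w : ZMod ℓ → α) : Prop := rotw (t : ZMod ℓ) w = w

/-- aperiodic cyclic word. -/
def Aper {ℓ : ℕ} (w : ZMod ℓ → α) : Prop := ∀ t : ZMod ℓ, t ≠ 0 → rotw t w ≠ w

lemma isPer_zero {ℓ : ℕ} (w : ZMod ℓ → α) : IsPer 0 w := by
  simp [IsPer, rotw_zero]

lemma isPer_self {ℓ : ℕ} (w : ZMod ℓ → α) : IsPer ℓ w := by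
  simp [IsPer, ZMod.natCast_self, rotw_zero]

lemma IsPer.add {ℓ : ℕ} {a b : ℕ} {w : ZMod ℓ → α} (ha : IsPer a w) (hb : IsPer b w) :
    IsPer (a + b) w := by
  unfold IsPer at *
  push_cast
  rw [← rotw_rotw, hb, ha]

lemma IsPer.mul {ℓ : ℕ} {a : ℕ} (s : ℕ) {w : ZMod ℓ → α} (ha : IsPer a w) :
    IsPer (a * s) w := by
  induction s with
  | zero => simpa using isPer_zero w
  | succ s ih => rw [Nat.mul_succ]; exact ih.add ha

lemma IsPer.sub {ℓ : ℕ} {a b : ℕ} {w : ZMod ℓ → α} (hab : a ≤ b)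
    (ha : IsPer a w) (hb : IsPer b w) : IsPer (b - a) w := by
  unfold IsPer at *
  funext i
  have h1 : ((b - a : ℕ) : ZMod ℓ) + (a : ZMod ℓ) = (b : ZMod ℓ) := by
    rw [← Nat.cast_add]; congr 1; omega
  have h2 := congrFun ha (i + ((b - a : ℕ) : ZMod ℓ))
  have h3 := congrFun hb i
  simp only [rotw] at *
  rw [add_assoc, h1] at h2
  rw [h2] at h3
  exact h3

lemma aper_iff {ℓ : ℕ} [NeZero ℓ] (w : ZMod ℓ → α) :
    Aper w ↔ ∀ t : ℕ, 0 < t → t < ℓ → ¬ IsPer t w := by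
  constructor
  · intro h t ht htl hp
    refine h (t : ZMod ℓ) ?_ hp
    intro h0
    have := ZMod.val_natCast (n := ℓ) t
    rw [h0] at this
    simp [Nat.mod_eq_of_lt htl] at this
    omega
  · intro h t ht hp
    have : t = ((t.val : ℕ) : ZMod ℓ) := (ZMod.natCast_rightInverse t).symm
    refine h t.val ?_ (ZMod.val_lt t) ?_
    · rcases Nat.eq_zero_or_pos t.val with h0 | h0
      · exact absurd ((ZMod.val_eq_zero t).mp h0) ht
      · exact h0
    · unfold IsPer; rw [← this]; exact hp

variable {ℓ : ℕ} [NeZero ℓ]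

attribute [local instance] Classical.propDecidable

lemma minp_ex (w : ZMod ℓ → α) : ∃ t, 0 < t ∧ IsPer t w :=
  ⟨ℓ, Nat.pos_of_ne_zero (NeZero.ne ℓ), isPer_self w⟩

/-- minimal period -/
noncomputable def minp (w : ZMod ℓ → α) : ℕ := Nat.find (minp_ex w)

lemma minp_pos (w : ZMod ℓ → α) : 0 < minp w := (Nat.find_spec (minp_ex w)).1

lemma minp_isPer (w : ZMod ℓ → α) : IsPer (minp w) w := (Nat.find_spec (minp_ex w)).2

lemma minp_min (w : ZMod ℓ → α) {t : ℕ} (ht : 0 < t) (hp : IsPer t w) : minp w ≤ t :=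
  Nat.find_le ⟨ht, hp⟩

lemma minp_dvd_of_isPer (w : ZMod ℓ → α) {t : ℕ} (hp : IsPer t w) : minp w ∣ t := by
  have hd := Nat.mod_add_div t (minp w)
  have hmod : IsPer (t % minp w) w := by
    have he : t % minp w = t - minp w * (t / minp w) := by omega
    rw [he]
    exact ((minp_isPer w).mul (t / minp w)).sub (Nat.mul_div_le t (minp w)) hp
  by_contra hc
  have h1 : 0 < t % minp w := Nat.pos_of_ne_zero (fun h => hc (Nat.dvd_of_mod_eq_zero h))
  have h2 := minp_min w h1 hmod
  have h3 : t % minp w < minp w := Nat.mod_lt t (minp_pos w)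
  omega

lemma minp_dvd (w : ZMod ℓ → α) : minp w ∣ ℓ := minp_dvd_of_isPer w (isPer_self w)

lemma isPer_of_dvd (w : ZMod ℓ → α) {t : ℕ} (h : minp w ∣ t) : IsPer t w := by
  obtain ⟨s, rfl⟩ := h
  exact (minp_isPer w).mul s



set_option linter.unusedSectionVars false

section Counting

variable {d : ℕ} [NeZero d] (hd : d ∣ ℓ)

/-- extension of a word of length `d ∣ ℓ` to length `ℓ`. -/
def extw (hd : d ∣ ℓ) (u : ZMod d → α) : ZMod ℓ → α :=
  fun i => u (ZMod.castHom hd (ZMod d) i)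

lemma extw_isPer_of (u : ZMod d → α) {t : ℕ} (h : IsPer t u) : IsPer t (extw hd u) := by
  funext i
  simp only [extw, rotw, map_add, map_natCast]
  exact congrFun h (ZMod.castHom hd (ZMod d) i)

lemma isPer_of_extw (u : ZMod d → α) {t : ℕ} (h : IsPer t (extw hd u)) : IsPer t u := by
  funext x
  have := congrFun h ((x.val : ℕ) : ZMod ℓ)
  simp only [extw, rotw, map_add, map_natCast] at this
  have hx : ((x.val : ℕ) : ZMod d) = x := ZMod.natCast_rightInverse x
  rw [hx] at this
  exact this

lemma minp_extw {u : ZMod d → α} (hu : Aper u) : minp (extw hd u) = d := by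
  have hper : IsPer d (extw hd u) := by
    apply extw_isPer_of
    simp [IsPer, ZMod.natCast_self, rotw_zero]
  have hmin : ∀ t, 0 < t → t < d → ¬ IsPer t (extw hd u) := by
    intro t ht htd hp
    exact ((aper_iff u).mp hu) t ht htd (isPer_of_extw hd u hp)
  have h1 := minp_min (extw hd u) (Nat.pos_of_ne_zero (NeZero.ne d)) hper
  rcases lt_or_eq_of_le h1 with h | h
  · exact absurd (minp_isPer (extw hd u)) (hmin _ (minp_pos _) h)
  · exact h

/-- restriction of a word of length `ℓ` to length `d`. -/
def restrw (w : ZMod ℓ → α) : ZMod d → α := fun x => w ((x.val : ℕ) : ZMod ℓ)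

lemma extw_restrw {w : ZMod ℓ → α} (hw : minp w = d) : extw hd (restrw w) = w := by
  funext i
  simp only [extw, restrw]
  have hi : ((i.val : ℕ) : ZMod ℓ) = i := ZMod.natCast_rightInverse i
  have h1 : ZMod.castHom hd (ZMod d) i = ((i.val : ℕ) : ZMod d) := by
    calc ZMod.castHom hd (ZMod d) i = ZMod.castHom hd (ZMod d) ((i.val : ℕ) : ZMod ℓ) := by
          rw [hi]
      _ = ((i.val : ℕ) : ZMod d) := map_natCast _ _
  have key : ∀ a s : ℕ, w (((a + d * s : ℕ) : ZMod ℓ)) = w ((a : ℕ) : ZMod ℓ) := by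
    intro a s
    have hp : IsPer (d * s) w := isPer_of_dvd w (by rw [hw]; exact Dvd.intro s rfl)
    have := congrFun hp ((a : ℕ) : ZMod ℓ)
    simp only [rotw] at this
    rw [← this]; push_cast; ring_nf
  have h2 : (((i.val : ℕ) : ZMod d)).val = i.val % d := ZMod.val_natCast _ _
  have h3 := key (i.val % d) (i.val / d)
  rw [Nat.mod_add_div] at h3
  rw [h1, h2, ← h3]
  exact congrArg w hi

include hd in
lemma aper_restrw {w : ZMod ℓ → α} (hw : minp w = d) : Aper (restrw w : ZMod d → α) := by
  rw [aper_iff]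
  intro t ht htd hp
  have hpw : IsPer t w := by
    rw [← extw_restrw hd hw]
    exact extw_isPer_of hd _ hp
  have := minp_min w ht hpw
  omega

lemma restrw_extw (u : ZMod d → α) : (restrw (extw hd u) : ZMod d → α) = u := by
  funext x
  simp only [restrw, extw, map_natCast]
  exact congrArg u (ZMod.natCast_rightInverse x)

end Counting

/-- aperiodic words as a subtype -/
def ApWord (ℓ : ℕ) (α : Type*) := {w : ZMod ℓ → α // Aper w}

/-- count of aperiodic words -/
noncomputable def apCount (α : Type*) (d : ℕ) : ℕ := Nat.card (ApWord d α)

lemma fiber_card_eq {ℓ d : ℕ} [NeZero ℓ] [Fintype α] [DecidableEq α]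
    (hd : d ∣ ℓ) (hd0 : d ≠ 0) :
    (Finset.univ.filter (fun w : ZMod ℓ → α => minp w = d)).card = apCount α d := by
  haveI : NeZero d := ⟨hd0⟩
  classical
  rw [← Fintype.card_subtype]
  unfold apCount ApWord
  rw [← Nat.card_eq_fintype_card]
  refine Nat.card_congr ⟨fun w => ⟨restrw w.val, aper_restrw hd w.prop⟩,
    fun u => ⟨extw hd u.val, minp_extw hd u.prop⟩, ?_, ?_⟩
  · intro w; exact Subtype.ext (extw_restrw hd w.prop)
  · intro u; exact Subtype.ext (restrw_extw hd u.val)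

lemma sum_apCount (α : Type*) [Fintype α] [DecidableEq α] {ℓ : ℕ} (hl : 0 < ℓ) :
    ∑ d ∈ ℓ.divisors, apCount α d = Fintype.card α ^ ℓ := by
  haveI : NeZero ℓ := ⟨hl.ne'⟩
  classical
  have h0 : ∀ w : ZMod ℓ → α, w ∈ Finset.univ → minp w ∈ ℓ.divisors := fun w _ =>
    Nat.mem_divisors.mpr ⟨minp_dvd w, hl.ne'⟩
  have hcard := Finset.card_eq_sum_card_fiberwise h0
  rw [Finset.card_univ, Fintype.card_fun, ZMod.card] at hcard
  rw [hcard]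
  apply Finset.sum_congr rfl
  intro d hdmem
  obtain ⟨hd, h0'⟩ := Nat.mem_divisors.mp hdmem
  exact (fiber_card_eq hd (by rintro rfl; exact h0' (zero_dvd_iff.mp hd))).symm

lemma apCount_eq_moebius_sum (α : Type*) [Fintype α] [DecidableEq α] {m : ℕ} (hm : 0 < m) :
    (apCount α m : ℤ) =
      ∑ d ∈ m.divisors, ArithmeticFunction.moebius (m / d) * (Fintype.card α : ℤ) ^ d := by
  have H := (ArithmeticFunction.sum_eq_iff_sum_smul_moebius_eq
    (f := fun d => (apCount α d : ℤ))
    (g := fun ℓ => (Fintype.card α : ℤ) ^ ℓ)).mp ?_ m hm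
  · rw [← H,
      ← Nat.sum_divisorsAntidiagonal' (f := fun a b =>
        (ArithmeticFunction.moebius a : ℤ) * (Fintype.card α : ℤ) ^ b)]
    apply Finset.sum_congr rfl
    intro x _
    simp [zsmul_eq_mul]
  · intro ℓ hl
    rw [← Nat.cast_sum, sum_apCount α hl]
    push_cast
    ring

/-- rotation setoid on aperiodic words -/
def rotSetoid (ℓ : ℕ) (α : Type*) : Setoid (ApWord ℓ α) where
  r w w' := ∃ t : ZMod ℓ, rotw t w.val = w'.val
  iseqv := by
    refine ⟨fun w => ⟨0, rotw_zero _⟩, ?_, ?_⟩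
    · rintro w w' ⟨t, ht⟩
      exact ⟨-t, by rw [← ht, rotw_rotw, neg_add_cancel, rotw_zero]⟩
    · rintro w w' w'' ⟨t, ht⟩ ⟨t', ht'⟩
      exact ⟨t' + t, by rw [← ht', ← ht, rotw_rotw]⟩

/-- necklace classes of aperiodic words -/
def NeckQ (ℓ : ℕ) (α : Type*) := Quotient (rotSetoid ℓ α)

lemma rotw_inj {ℓ : ℕ} (t : ZMod ℓ) : Function.Injective (rotw t (α := α)) := by
  intro w w' h
  funext i
  have := congrFun h (i - t)
  simpa [rotw, sub_add_cancel] using this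

lemma aper_rotw {ℓ : ℕ} {w : ZMod ℓ → α} (hw : Aper w) (t : ZMod ℓ) : Aper (rotw t w) := by
  intro s hs h
  apply hw s hs
  apply rotw_inj t
  rw [rotw_rotw] at h ⊢
  rw [add_comm t s]
  exact h

/-- rotation on aperiodic words -/
def rotA {ℓ : ℕ} (t : ZMod ℓ) (w : ApWord ℓ α) : ApWord ℓ α := ⟨rotw t w.val, aper_rotw w.prop t⟩

lemma card_apWord {m : ℕ} [NeZero m] [Fintype α] [DecidableEq α] :
    Nat.card (ApWord m α) = m * Nat.card (NeckQ m α) := by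
  classical
  letI : Setoid (ApWord m α) := rotSetoid m α
  haveI : Fintype (ApWord m α) := by unfold ApWord; infer_instance
  haveI : Fintype (Quotient (rotSetoid m α)) := Quotient.fintype _
  have hNQ : Nat.card (NeckQ m α) = Fintype.card (Quotient (rotSetoid m α)) := by
    have h : Nat.card (NeckQ m α) = Nat.card (Quotient (rotSetoid m α)) := rfl
    rw [h, Nat.card_eq_fintype_card]
  rw [Nat.card_eq_fintype_card (α := ApWord m α), hNQ]
  have h0 : ∀ w : ApWord m α, w ∈ Finset.univ →
      Quotient.mk (rotSetoid m α) w ∈ Finset.univ := fun _ _ => Finset.mem_univ _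
  have hcard := Finset.card_eq_sum_card_fiberwise h0
  rw [Finset.card_univ] at hcard
  rw [hcard]
  have hfib : ∀ c ∈ (Finset.univ : Finset (Quotient (rotSetoid m α))),
      (Finset.univ.filter (fun a : ApWord m α => Quotient.mk (rotSetoid m α) a = c)).card
        = m := by
    intro c _
    rw [← Fintype.card_subtype]
    conv_rhs => rw [← ZMod.card m]
    symm
    apply Fintype.card_congr
    refine Equiv.ofBijective (fun t : ZMod m =>
      ⟨rotA t c.out, by
        have h1 : (Quotient.mk (rotSetoid m α) (rotA t c.out)) = Quotient.mk _ c.out :=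
          Quotient.sound (Setoid.symm ⟨t, rfl⟩)
        show Quotient.mk (rotSetoid m α) (rotA t c.out) = c
        rw [h1, Quotient.out_eq]⟩) ⟨?_, ?_⟩
    · intro t t' h
      have h1 : rotw t c.out.val = rotw t' c.out.val := congrArg (fun x => x.val.val) h
      by_contra hne
      apply c.out.prop (t - t') (sub_ne_zero.mpr hne)
      apply rotw_inj t'
      rw [rotw_rotw, show t' + (t - t') = t from by ring]
      exact h1
    · rintro ⟨w, hw⟩
      have : w ≈ c.out := Quotient.exact (by rw [hw, Quotient.out_eq])
      obtain ⟨t, ht⟩ := this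
      refine ⟨-t, ?_⟩
      apply Subtype.ext
      apply Subtype.ext
      show rotw (-t) c.out.val = w.val
      rw [← ht, rotw_rotw, neg_add_cancel, rotw_zero]
  rw [Finset.sum_congr rfl hfib, Finset.sum_const, Finset.card_univ, smul_eq_mul, mul_comm]

lemma card_neckQ (α : Type*) [Fintype α] [DecidableEq α] {m : ℕ} [NeZero m] :
    Nat.card (NeckQ m α) = necklaceNat (Fintype.card α) m := by
  have hm : 0 < m := Nat.pos_of_ne_zero (NeZero.ne m)
  have h1 : (apCount α m : ℤ) = m * Nat.card (NeckQ m α) := by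
    rw [show apCount α m = Nat.card (ApWord m α) from rfl, card_apWord]
    push_cast
    ring
  unfold necklaceNat
  rw [← apCount_eq_moebius_sum α hm, h1]
  rw [Int.mul_ediv_cancel_left _ (by exact_mod_cast hm.ne' : (m:ℤ) ≠ 0)]
  simp


section Euler

variable {V E : Type*} [DecidableEq E] [DecidableEq V] (src tgt : E → V)

/-- walks in a multigraph given by `src`, `tgt` -/
inductive Walk : V → List E → V → Prop
  | nil (v : V) : Walk v [] v
  | cons (e : E) {l : List E} {w : V} : Walk (tgt e) l w → Walk (src e) (e :: l) w

lemma Walk.append {v w x : V} {l l' : List E} (h : Walk src tgt v l w)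
    (h' : Walk src tgt w l' x) : Walk src tgt v (l ++ l') x := by
  induction h with
  | nil v => exact h'
  | cons e hw ih => exact Walk.cons e (ih h')

lemma Walk.src_eq {v w : V} {e : E} {l : List E} (h : Walk src tgt v (e :: l) w) :
    src e = v ∧ Walk src tgt (tgt e) l w := by
  cases h with
  | cons e h => exact ⟨rfl, h⟩

lemma Walk.eq_of_nil {v w : V} (h : Walk src tgt v [] w) : v = w := by
  cases h; rfl

lemma walk_src_getD (d : E) {v w : V} {l : List E} (h : Walk src tgt v l w)
    (hl : 0 < l.length) : src (l.getD 0 d) = v := by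
  cases l with
  | nil => simp at hl
  | cons e l' => exact (h.src_eq src tgt).1

lemma walk_getD_chain (d : E) : ∀ {l : List E} {v w : V}, Walk src tgt v l w →
    ∀ j, j + 1 < l.length → tgt (l.getD j d) = src (l.getD (j+1) d) := by
  intro l
  induction l with
  | nil =>
    intro v w h j hj
    simp at hj
  | cons e l ih =>
    intro v w h j hj
    obtain ⟨he, h2⟩ := h.src_eq src tgt
    cases j with
    | zero =>
      cases l with
      | nil => simp at hj
      | cons f l2 =>
        obtain ⟨hf, _⟩ := h2.src_eq src tgt
        simpa using hf.symm
    | succ j =>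
      simp only [List.getD_cons_succ]
      exact ih h2 j (by simpa using hj)

lemma walk_tgt_getD (d : E) : ∀ {l : List E} {v w : V}, Walk src tgt v l w →
    ∀ j, j + 1 = l.length → tgt (l.getD j d) = w := by
  intro l
  induction l with
  | nil =>
    intro v w h j hj
    simp at hj
  | cons e l ih =>
    intro v w h j hj
    obtain ⟨he, h2⟩ := h.src_eq src tgt
    cases j with
    | zero =>
      cases l with
      | nil => simpa using h2.eq_of_nil src tgt
      | cons f l2 => simp at hj
    | succ j =>
      simp only [List.getD_cons_succ]
      exact ih h2 j (by simpa using hj)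

/-- conservation law along a trail -/
lemma trail_count {v w x : V} {l : List E} (h : Walk src tgt v l w) (hnd : l.Nodup) :
    ((l.toFinset.filter (fun e => src e = x)).card + (if w = x then 1 else 0) =
      (l.toFinset.filter (fun e => tgt e = x)).card + (if v = x then 1 else 0)) := by
  induction h with
  | nil v => simp
  | cons e hw ih =>
    rename_i l' w'
    rw [List.nodup_cons] at hnd
    have henl : e ∉ l'.toFinset := by simp [hnd.1]
    have ih' := ih hnd.2
    rw [List.toFinset_cons, Finset.filter_insert, Finset.filter_insert]
    have hc1 : (insert e (Finset.filter (fun e => src e = x) l'.toFinset)).card =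
        (Finset.filter (fun e => src e = x) l'.toFinset).card + 1 :=
      Finset.card_insert_of_notMem (by simp [henl])
    have hc2 : (insert e (Finset.filter (fun e => tgt e = x) l'.toFinset)).card =
        (Finset.filter (fun e => tgt e = x) l'.toFinset).card + 1 :=
      Finset.card_insert_of_notMem (by simp [henl])
    by_cases hs : src e = x <;> by_cases ht : tgt e = x <;>
        by_cases hwx : w' = x <;>
      simp only [hs, ht, hwx, if_true, if_false, hc1, hc2, if_pos, if_neg, not_false_iff,
        if_pos rfl] at ih' ⊢ <;>
      first
        | omega
        | (rw [if_neg hwx] at ih' ⊢; omega)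
        | (rw [if_neg hs] at ih' ⊢ <;> omega)
        | (rw [if_neg ht] at ih' ⊢ <;> omega)
        | (rw [if_neg hwx, if_neg hs] at ih' ⊢ <;> omega)
        | (rw [if_neg hwx, if_neg ht] at ih' ⊢ <;> omega)
        | (rw [if_neg hwx, if_neg hs, if_neg ht] at ih' ⊢ <;> omega)

/-- set of available edges is balanced -/
def BalancedF (S : Finset E) : Prop :=
  ∀ x : V, (S.filter (fun e => src e = x)).card = (S.filter (fun e => tgt e = x)).card

lemma nodup_length_le {S : Finset E} {l : List E} (hnd : l.Nodup) (hsub : ∀ e ∈ l, e ∈ S) :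
    l.length ≤ S.card := by
  rw [← List.toFinset_card_of_nodup hnd]
  exact Finset.card_le_card (fun e he => hsub e (List.mem_toFinset.mp he))

/-- if a trail ends at `w ≠ v`, there is a fresh outgoing edge at `w` -/
lemma exists_fresh {S : Finset E} {v w : V} {l : List E} (hbal : BalancedF src tgt S)
    (h : Walk src tgt v l w) (hnd : l.Nodup) (hsub : ∀ e ∈ l, e ∈ S) (hwv : w ≠ v) :
    ∃ e ∈ S, e ∉ l ∧ src e = w := by
  have hcount := trail_count src tgt (x := w) h hnd
  rw [if_pos rfl, if_neg (show ¬ v = w from fun hh => hwv hh.symm)] at hcount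
  have hsub1 : l.toFinset.filter (fun e => src e = w) ⊆ S.filter (fun e => src e = w) := by
    intro e he
    rw [Finset.mem_filter] at he ⊢
    exact ⟨hsub e (List.mem_toFinset.mp he.1), he.2⟩
  have hsub2 : l.toFinset.filter (fun e => tgt e = w) ⊆ S.filter (fun e => tgt e = w) := by
    intro e he
    rw [Finset.mem_filter] at he ⊢
    exact ⟨hsub e (List.mem_toFinset.mp he.1), he.2⟩
  have h2 : (l.toFinset.filter (fun e => tgt e = w)).card
      ≤ (S.filter (fun e => tgt e = w)).card := Finset.card_le_card hsub2
  have h3 : (l.toFinset.filter (fun e => src e = w)).card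
      < (S.filter (fun e => src e = w)).card := by
    rw [hbal w]; omega
  by_contra hcon
  push_neg at hcon
  have hsub3 : S.filter (fun e => src e = w) ⊆ l.toFinset.filter (fun e => src e = w) := by
    intro e he
    rw [Finset.mem_filter] at he
    rw [Finset.mem_filter, List.mem_toFinset]
    by_cases hel : e ∈ l
    · exact ⟨hel, he.2⟩
    · exact absurd he.2 (hcon e he.1 hel)
  have := Finset.card_le_card hsub3
  omega

/-- any trail can be extended to a closed trail in a balanced graph -/
lemma close_trail {S : Finset E} (hbal : BalancedF src tgt S) :
    ∀ (N : ℕ) {v w : V} {l : List E}, Walk src tgt v l w → l.Nodup → (∀ e ∈ l, e ∈ S) →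
      S.card ≤ l.length + N →
      ∃ ext, Walk src tgt v (l ++ ext) v ∧ (l ++ ext).Nodup ∧ (∀ e ∈ l ++ ext, e ∈ S) := by
  intro N
  induction N with
  | zero =>
    intro v w l hw hnd hsub hlen
    by_cases hwv : w = v
    · subst hwv; exact ⟨[], by simpa using ⟨hw, hnd, hsub⟩⟩
    · obtain ⟨e, heS, hel, hesrc⟩ := exists_fresh src tgt hbal hw hnd hsub hwv
      exfalso
      have h1 : (e :: l).Nodup := List.nodup_cons.mpr ⟨hel, hnd⟩
      have h2 : ∀ f ∈ e :: l, f ∈ S := by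
        intro f hf; rcases List.mem_cons.mp hf with rfl | hf
        · exact heS
        · exact hsub f hf
      have := nodup_length_le h1 h2
      simp at this
      omega
  | succ N ih =>
    intro v w l hw hnd hsub hlen
    by_cases hwv : w = v
    · subst hwv; exact ⟨[], by simpa using ⟨hw, hnd, hsub⟩⟩
    · obtain ⟨e, heS, hel, hesrc⟩ := exists_fresh src tgt hbal hw hnd hsub hwv
      have hw' : Walk src tgt v (l ++ [e]) (tgt e) :=
        hw.append src tgt (hesrc ▸ Walk.cons e (Walk.nil (tgt e)))
      have hnd' : (l ++ [e]).Nodup := by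
        rw [List.nodup_append]
        exact ⟨hnd, List.nodup_singleton e, by intro a ha b hb hab; rw [List.mem_singleton] at hb; subst hb; subst hab; exact hel ha⟩
      have hsub' : ∀ f ∈ l ++ [e], f ∈ S := by
        intro f hf
        rcases List.mem_append.mp hf with hf | hf
        · exact hsub f hf
        · rw [List.mem_singleton.mp hf]; exact heS
      obtain ⟨ext, hwe, hnde, hsube⟩ := ih hw' hnd' hsub' (by simp; omega)
      exact ⟨[e] ++ ext, by simpa using hwe, by simpa using hnde, by simpa using hsube⟩

/-- splitting a walk at an edge -/
lemma walk_split {v w : V} {l : List E} (h : Walk src tgt v l w) {f : E} (hf : f ∈ l) :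
    ∃ l1 l2, l = l1 ++ f :: l2 ∧ Walk src tgt v l1 (src f) ∧ Walk src tgt (tgt f) l2 w := by
  induction h with
  | nil v => simp at hf
  | cons e hw ih =>
    rcases List.mem_cons.mp hf with rfl | hf
    · exact ⟨[], _, rfl, Walk.nil _, hw⟩
    · obtain ⟨l1, l2, heq, h1, h2⟩ := ih hf
      exact ⟨e :: l1, l2, by rw [heq]; rfl, Walk.cons e h1, h2⟩

/-- a closed trail is balanced as an edge set -/
lemma closed_trail_balanced {v : V} {C : List E} (h : Walk src tgt v C v) (hnd : C.Nodup) :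
    BalancedF src tgt C.toFinset := by
  intro x
  have := trail_count src tgt (x := x) h hnd
  omega

lemma balanced_sdiff {S : Finset E} {v : V} {C : List E} (hbal : BalancedF src tgt S)
    (h : Walk src tgt v C v) (hnd : C.Nodup) (hsub : ∀ e ∈ C, e ∈ S) :
    BalancedF src tgt (S \ C.toFinset) := by
  intro x
  have h1 : (S \ C.toFinset).filter (fun e => src e = x)
      = S.filter (fun e => src e = x) \ C.toFinset.filter (fun e => src e = x) := by
    ext e; simp [Finset.mem_sdiff, Finset.mem_filter]; tauto
  have h2 : (S \ C.toFinset).filter (fun e => tgt e = x)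
      = S.filter (fun e => tgt e = x) \ C.toFinset.filter (fun e => tgt e = x) := by
    ext e; simp [Finset.mem_sdiff, Finset.mem_filter]; tauto
  have hs1 : C.toFinset.filter (fun e => src e = x) ⊆ S.filter (fun e => src e = x) := by
    intro e he; rw [Finset.mem_filter] at he ⊢
    exact ⟨hsub e (List.mem_toFinset.mp he.1), he.2⟩
  have hs2 : C.toFinset.filter (fun e => tgt e = x) ⊆ S.filter (fun e => tgt e = x) := by
    intro e he; rw [Finset.mem_filter] at he ⊢
    exact ⟨hsub e (List.mem_toFinset.mp he.1), he.2⟩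
  rw [h1, h2, Finset.card_sdiff_of_subset hs1, Finset.card_sdiff_of_subset hs2, hbal x,
    closed_trail_balanced src tgt h hnd x]

/-- undirected step and connectivity relative to an edge set -/
def Step (S : Finset E) (a b : V) : Prop :=
  ∃ e ∈ S, (src e = a ∧ tgt e = b) ∨ (src e = b ∧ tgt e = a)

def Conn (S : Finset E) : V → V → Prop := Relation.ReflTransGen (Step src tgt S)

/-- main step: Euler circuit by induction -/
lemma euler_aux (v₀ : V) {S : Finset E} (hbal : BalancedF src tgt S)
    (hconn : ∀ e ∈ S, Conn src tgt S v₀ (src e)) :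
    ∀ (N : ℕ) {C : List E}, Walk src tgt v₀ C v₀ → C.Nodup → (∀ e ∈ C, e ∈ S) →
      S.card ≤ C.length + N →
      ∃ l : List E, Walk src tgt v₀ l v₀ ∧ l.Nodup ∧ (∀ e, e ∈ l ↔ e ∈ S) := by
  intro N
  induction N with
  | zero =>
    intro C hw hnd hsub hlen
    refine ⟨C, hw, hnd, fun e => ⟨hsub e, fun heS => ?_⟩⟩
    have h1 : C.toFinset ⊆ S := fun f hf => hsub f (List.mem_toFinset.mp hf)
    have h2 : C.toFinset = S := Finset.eq_of_subset_of_card_le h1 (by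
      rw [List.toFinset_card_of_nodup hnd]; omega)
    rw [← List.mem_toFinset, h2]; exact heS
  | succ N ih =>
    intro C hw hnd hsub hlen
    by_cases hall : ∀ e ∈ S, e ∈ C
    · exact ⟨C, hw, hnd, fun e => ⟨hsub e, hall e⟩⟩
    · push_neg at hall
      obtain ⟨e₀, he₀S, he₀C⟩ := hall
      -- U: vertices on the closed trail C (including v₀)
      set U : V → Prop := fun x => x = v₀ ∨ ∃ f ∈ C, src f = x ∨ tgt f = x with hU
      -- find a fresh edge with an endpoint in U
      have claim1 : ∀ x, Conn src tgt S v₀ x →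
          U x ∨ ∃ e ∈ S, e ∉ C ∧ (U (src e) ∨ U (tgt e)) := by
        intro x hx
        induction hx with
        | refl => exact Or.inl (Or.inl rfl)
        | tail hab hstep ihc =>
          rcases ihc with hUx | hdone
          · obtain ⟨f, hfS, hf⟩ := hstep
            by_cases hfC : f ∈ C
            · left
              rcases hf with ⟨h1, h2⟩ | ⟨h1, h2⟩
              · exact Or.inr ⟨f, hfC, Or.inr h2⟩
              · exact Or.inr ⟨f, hfC, Or.inl h1⟩
            · right
              refine ⟨f, hfS, hfC, ?_⟩
              rcases hf with ⟨h1, h2⟩ | ⟨h1, h2⟩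
              · exact Or.inl (h1 ▸ hUx)
              · exact Or.inr (h2 ▸ hUx)
          · exact Or.inr hdone
      have hfresh : ∃ e ∈ S, e ∉ C ∧ (U (src e) ∨ U (tgt e)) := by
        rcases claim1 (src e₀) (hconn e₀ he₀S) with hU0 | hdone
        · exact ⟨e₀, he₀S, he₀C, Or.inl hU0⟩
        · exact hdone
      obtain ⟨e₁, he₁S, he₁C, he₁U⟩ := hfresh
      have hbal' : BalancedF src tgt (S \ C.toFinset) := balanced_sdiff src tgt hbal hw hnd hsub
      -- get a fresh edge whose SOURCE is in U
      have hsrcU : ∃ e', e' ∈ S ∧ e' ∉ C ∧ U (src e') := by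
        rcases he₁U with h | h
        · exact ⟨e₁, he₁S, he₁C, h⟩
        · -- tgt e₁ ∈ U; use balance at tgt e₁ in S \ C
          have hin : e₁ ∈ (S \ C.toFinset).filter (fun e => tgt e = tgt e₁) := by
            rw [Finset.mem_filter, Finset.mem_sdiff, List.mem_toFinset]
            exact ⟨⟨he₁S, he₁C⟩, rfl⟩
          have hpos : 0 < ((S \ C.toFinset).filter (fun e => src e = tgt e₁)).card := by
            rw [hbal' (tgt e₁)]
            exact Finset.card_pos.mpr ⟨e₁, hin⟩
          obtain ⟨e', he'⟩ := Finset.card_pos.mp hpos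
          rw [Finset.mem_filter, Finset.mem_sdiff, List.mem_toFinset] at he'
          exact ⟨e', he'.1.1, he'.1.2, he'.2 ▸ h⟩
      obtain ⟨e', he'S, he'C, he'U⟩ := hsrcU
      set w := src e' with hwdef
      -- split C at w
      have hsplit : ∃ C1 C2, C = C1 ++ C2 ∧ Walk src tgt v₀ C1 w ∧ Walk src tgt w C2 v₀ := by
        rcases he'U with h | ⟨f, hfC, hf⟩
        · exact ⟨[], C, rfl, h ▸ Walk.nil w, h.symm ▸ hw⟩
        · obtain ⟨l1, l2, heq, h1, h2⟩ := walk_split src tgt hw hfC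
          rcases hf with hf | hf
          · exact ⟨l1, f :: l2, heq, hf ▸ h1, by
              rw [← hf]; exact Walk.cons f h2⟩
          · refine ⟨l1 ++ [f], l2, by rw [heq]; simp, ?_, hf ▸ h2⟩
            exact hf ▸ h1.append src tgt (Walk.cons f (Walk.nil (tgt f)))
      obtain ⟨C1, C2, hCeq, hwC1, hwC2⟩ := hsplit
      -- grow a closed trail D from w in S \ C
      have hwD : Walk src tgt w [e'] (tgt e') := hwdef ▸ Walk.cons e' (Walk.nil (tgt e'))
      have he'mem : e' ∈ S \ C.toFinset := by
        rw [Finset.mem_sdiff, List.mem_toFinset]; exact ⟨he'S, he'C⟩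
      obtain ⟨ext, hwDe, hndDe, hsubDe⟩ := close_trail src tgt hbal' (S \ C.toFinset).card
        hwD (List.nodup_singleton e') (by simpa using he'mem) (by simp)
      set D := [e'] ++ ext with hD
      -- new closed trail
      have hwC' : Walk src tgt v₀ (C1 ++ (D ++ C2)) v₀ :=
        hwC1.append src tgt (hwDe.append src tgt hwC2)
      have hDsub : ∀ f ∈ D, f ∈ S \ C.toFinset := hsubDe
      have hndC' : (C1 ++ (D ++ C2)).Nodup := by
        have hndC : (C1 ++ C2).Nodup := hCeq ▸ hnd
        rw [List.nodup_append] at hndC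
        rw [List.nodup_append, List.nodup_append]
        refine ⟨hndC.1, ⟨hndDe, hndC.2.1, ?_⟩, ?_⟩
        · -- D disjoint from C2
          intro f hfD g hfC2 hfg
          subst hfg
          have := (Finset.mem_sdiff.mp (hDsub f hfD)).2
          rw [List.mem_toFinset, hCeq] at this
          exact this (List.mem_append.mpr (Or.inr hfC2))
        · -- C1 disjoint from D ++ C2
          intro f hfC1 g hf hfg
          subst hfg
          rcases List.mem_append.mp hf with hfD | hfC2
          · have := (Finset.mem_sdiff.mp (hDsub f hfD)).2
            rw [List.mem_toFinset, hCeq] at this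
            exact this (List.mem_append.mpr (Or.inl hfC1))
          · exact hndC.2.2 f hfC1 f hfC2 rfl
      have hsubC' : ∀ f ∈ C1 ++ (D ++ C2), f ∈ S := by
        intro f hf
        rcases List.mem_append.mp hf with h | h
        · exact hsub f (hCeq ▸ List.mem_append.mpr (Or.inl h))
        · rcases List.mem_append.mp h with h | h
          · exact (Finset.mem_sdiff.mp (hDsub f h)).1
          · exact hsub f (hCeq ▸ List.mem_append.mpr (Or.inr h))
      apply ih hwC' hndC' hsubC'
      have hlenC : (C1 ++ (D ++ C2)).length = C.length + D.length := by
        rw [hCeq]; simp [hD]; omega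
      have hDpos : 0 < D.length := by simp [hD]
      omega

/-- Euler circuit theorem -/
theorem euler_circuit (v₀ : V) {S : Finset E} (hbal : BalancedF src tgt S)
    (hconn : ∀ e ∈ S, Conn src tgt S v₀ (src e)) :
    ∃ l : List E, Walk src tgt v₀ l v₀ ∧ l.Nodup ∧ (∀ e, e ∈ l ↔ e ∈ S) :=
  euler_aux src tgt v₀ hbal hconn S.card (Walk.nil v₀) List.nodup_nil (by simp) (by simp)

end Euler




section Ring

variable (m nn k : ℕ) [NeZero m]

/-- row type -/
abbrev RowT := Fin (nn+1) → Fin (k+2)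
/-- full pattern type -/
abbrev PatT := ZMod m → RowT nn k
/-- vertex (overlap) type -/
abbrev VtxT := ZMod m → Fin nn → Fin (k+2)

variable {m nn k}

/-- first `nn` columns -/
def srcP (w : PatT m nn k) : VtxT m nn k := fun i b => w i b.castSucc
/-- last `nn` columns -/
def tgtP (w : PatT m nn k) : VtxT m nn k := fun i b => w i b.succ

lemma srcP_rotw (t : ZMod m) (w : PatT m nn k) : srcP (rotw t w) = rotw t (srcP w) := rfl
lemma tgtP_rotw (t : ZMod m) (w : PatT m nn k) : tgtP (rotw t w) = rotw t (tgtP w) := rfl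

/-- setoid by rotation on arbitrary words -/
def rotVSetoid (ℓ : ℕ) (α : Type*) : Setoid (ZMod ℓ → α) where
  r w w' := ∃ t : ZMod ℓ, rotw t w = w'
  iseqv := by
    refine ⟨fun w => ⟨0, rotw_zero _⟩, ?_, ?_⟩
    · rintro w w' ⟨t, ht⟩
      exact ⟨-t, by rw [← ht, rotw_rotw, neg_add_cancel, rotw_zero]⟩
    · rintro w w' w'' ⟨t, ht⟩ ⟨t', ht'⟩
      exact ⟨t' + t, by rw [← ht', ← ht, rotw_rotw]⟩

variable (m nn k)

/-- vertex classes -/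
def VQ := Quotient (rotVSetoid m (Fin nn → Fin (k+2)))
/-- edge classes: necklaces of aperiodic patterns -/
def EQ := NeckQ m (RowT nn k)

variable {m nn k}

def srcQ : EQ m nn k → VQ m nn k :=
  Quotient.lift (fun w : ApWord m (RowT nn k) => Quotient.mk _ (srcP w.val))
    (by rintro w w' ⟨t, ht⟩
        exact Quotient.sound ⟨t, by rw [← ht]; rfl⟩)

def tgtQ : EQ m nn k → VQ m nn k :=
  Quotient.lift (fun w : ApWord m (RowT nn k) => Quotient.mk _ (tgtP w.val))
    (by rintro w w' ⟨t, ht⟩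
        exact Quotient.sound ⟨t, by rw [← ht]; rfl⟩)

lemma srcQ_mk (w : ApWord m (RowT nn k)) :
    srcQ (Quotient.mk _ w) = Quotient.mk _ (srcP w.val) := rfl
lemma tgtQ_mk (w : ApWord m (RowT nn k)) :
    tgtQ (Quotient.mk _ w) = Quotient.mk _ (tgtP w.val) := rfl

/-- the marker column -/
def ucol : ZMod m → Fin (k+2) := fun i => if i = 0 then 1 else 0

lemma aper_of_ucol_col {w : PatT m nn k} (b : Fin (nn+1)) (hb : ∀ i, w i b = ucol i) :
    Aper w := by
  intro t ht h
  apply ht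
  have h1 : ∀ i : ZMod m, w (i + t) b = w i b := fun i => congrFun (congrFun h i) b
  have h2 : (ucol (0 + t) : Fin (k+2)) = ucol (0 : ZMod m) := by
    rw [← hb (0 + t), ← hb 0]; exact h1 0
  rw [zero_add] at h2
  simp only [ucol, if_pos rfl] at h2
  by_contra hne
  rw [if_neg hne] at h2
  exact absurd h2.symm one_ne_zero

end Ring

section Ring2

variable {m nn k : ℕ} [NeZero m]

def tauP (w : PatT m nn k) : PatT m nn k := fun i b =>
  if b.val = 0 then w i (Fin.last nn)
  else w i ⟨b.val - 1, lt_of_le_of_lt (Nat.sub_le _ _) b.isLt⟩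
def tauP' (w : PatT m nn k) : PatT m nn k := fun i b =>
  if h : b.val = nn then w i ⟨0, Nat.succ_pos nn⟩
  else w i ⟨b.val + 1, by have := b.isLt; omega⟩

lemma tauP'_tauP (w : PatT m nn k) : tauP' (tauP w) = w := by
  funext i b
  simp only [tauP, tauP']
  by_cases h1 : b.val = nn
  · rw [dif_pos h1, if_true]
    exact congrArg (w i) (Fin.ext (by simp [Fin.last, h1]))
  · rw [dif_neg h1, if_neg (by simp)]
    exact congrArg (w i) (Fin.ext (by simp))

lemma tauP_tauP' (w : PatT m nn k) : tauP (tauP' w) = w := by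
  funext i b
  simp only [tauP, tauP']
  by_cases h1 : b.val = 0
  · rw [if_pos h1, dif_pos (by simp [Fin.last])]
    exact congrArg (w i) (Fin.ext (by simp [h1]))
  · rw [if_neg h1, dif_neg (by have := b.isLt; simp; omega)]
    exact congrArg (w i) (Fin.ext (by have := b.isLt; simp; omega))

lemma tgtP_tauP (w : PatT m nn k) : tgtP (tauP w) = srcP w := by
  funext i b
  simp only [tgtP, tauP, srcP]
  rw [if_neg (by simp [Fin.val_succ])]
  exact congrArg (w i) (Fin.ext (by simp [Fin.val_succ]))

lemma srcP_tauP' (w : PatT m nn k) : srcP (tauP' w) = tgtP w := by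
  funext i b
  simp only [srcP, tauP', tgtP]
  rw [dif_neg (by rw [Fin.coe_castSucc]; exact Nat.ne_of_lt b.isLt)]
  exact congrArg (w i) (Fin.ext (by simp [Fin.val_succ]))

lemma tauP_rotw (t : ZMod m) (w : PatT m nn k) : tauP (rotw t w) = rotw t (tauP w) := rfl
lemma tauP'_rotw (t : ZMod m) (w : PatT m nn k) : tauP' (rotw t w) = rotw t (tauP' w) := rfl

lemma aper_tauP {w : PatT m nn k} (hw : Aper w) : Aper (tauP w) := by
  intro t ht h
  apply hw t ht
  have : tauP' (tauP (rotw t w)) = tauP' (tauP w) := by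
    rw [tauP_rotw, h]
  rwa [tauP'_tauP, tauP'_tauP] at this

lemma aper_tauP' {w : PatT m nn k} (hw : Aper w) : Aper (tauP' w) := by
  intro t ht h
  apply hw t ht
  have : tauP (tauP' (rotw t w)) = tauP (tauP' w) := by
    rw [tauP'_rotw, h]
  rwa [tauP_tauP', tauP_tauP'] at this

/-- column shift on edge classes -/
def tauQ : EQ m nn k → EQ m nn k :=
  Quotient.lift (fun w : ApWord m (RowT nn k) =>
    Quotient.mk (rotSetoid m (RowT nn k)) ⟨tauP w.val, aper_tauP w.prop⟩)
    (by rintro w w' ⟨t, ht⟩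
        exact Quotient.sound ⟨t, by show rotw t (tauP w.val) = tauP w'.val
                                    rw [← ht, tauP_rotw]⟩)

def tauQ' : EQ m nn k → EQ m nn k :=
  Quotient.lift (fun w : ApWord m (RowT nn k) =>
    Quotient.mk (rotSetoid m (RowT nn k)) ⟨tauP' w.val, aper_tauP' w.prop⟩)
    (by rintro w w' ⟨t, ht⟩
        exact Quotient.sound ⟨t, by show rotw t (tauP' w.val) = tauP' w'.val
                                    rw [← ht, tauP'_rotw]⟩)

lemma tauQ'_tauQ (e : EQ m nn k) : tauQ' (tauQ e) = e := by
  induction e using Quotient.inductionOn with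
  | h w => exact congrArg (Quotient.mk _) (Subtype.ext (tauP'_tauP w.val))

lemma tauQ_tauQ' (e : EQ m nn k) : tauQ (tauQ' e) = e := by
  induction e using Quotient.inductionOn with
  | h w => exact congrArg (Quotient.mk _) (Subtype.ext (tauP_tauP' w.val))

lemma tgtQ_tauQ (e : EQ m nn k) : tgtQ (tauQ e) = srcQ e := by
  induction e using Quotient.inductionOn with
  | h w => exact congrArg (Quotient.mk _) (tgtP_tauP w.val)

lemma srcQ_tauQ' (e : EQ m nn k) : srcQ (tauQ' e) = tgtQ e := by
  induction e using Quotient.inductionOn with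
  | h w => exact congrArg (Quotient.mk _) (srcP_tauP' w.val)

lemma ring_balanced [Fintype (EQ m nn k)] [DecidableEq (VQ m nn k)] :
    BalancedF (srcQ (m := m) (nn := nn) (k := k)) tgtQ Finset.univ := by
  intro x
  refine Finset.card_bij' (fun e _ => tauQ e) (fun e _ => tauQ' e) ?_ ?_ ?_ ?_
  · intro a ha
    rw [Finset.mem_filter] at ha ⊢
    exact ⟨Finset.mem_univ _, by rw [tgtQ_tauQ]; exact ha.2⟩
  · intro a ha
    rw [Finset.mem_filter] at ha ⊢
    exact ⟨Finset.mem_univ _, by rw [srcQ_tauQ']; exact ha.2⟩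
  · intro a _
    exact tauQ'_tauQ a
  · intro a _
    exact tauQ_tauQ' a

end Ring2

section Ring3

variable {m nn k : ℕ} [NeZero m]

def pushP (v : VtxT m nn k) (c : ZMod m → Fin (k+2)) : PatT m nn k := fun i b =>
  if h : b.val < nn then v i ⟨b.val, h⟩ else c i

lemma srcP_pushP (v : VtxT m nn k) (c : ZMod m → Fin (k+2)) : srcP (pushP v c) = v := by
  funext i b
  simp only [srcP, pushP]
  rw [dif_pos (show (b.castSucc : Fin (nn+1)).val < nn from by
    rw [Fin.coe_castSucc]; exact b.isLt)]
  exact congrArg (v i) (Fin.ext (by simp))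

def pushV (v : VtxT m nn k) (c : ZMod m → Fin (k+2)) : VtxT m nn k := tgtP (pushP v c)

def vtx0 : VtxT m nn k := fun _ _ => 0
def vu : VtxT m nn k := fun i _ => ucol i

lemma aper_pushP_ucol (v : VtxT m nn k) : Aper (pushP v ucol) :=
  aper_of_ucol_col (Fin.last nn) (fun i => by
    simp only [pushP]
    rw [dif_neg (by simp [Fin.last])])

lemma aper_pushP_of_ucol_col (v : VtxT m nn k) (c : ZMod m → Fin (k+2)) (b0 : Fin nn)
    (hb : ∀ i, v i b0 = ucol i) : Aper (pushP v c) :=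
  aper_of_ucol_col b0.castSucc (fun i => by
    simp only [pushP]
    rw [dif_pos (show (b0.castSucc : Fin (nn+1)).val < nn from by
      rw [Fin.coe_castSucc]; exact b0.isLt)]
    have hh : (⟨(b0.castSucc : Fin (nn+1)).val, by rw [Fin.coe_castSucc]; exact b0.isLt⟩ : Fin nn)
        = b0 := Fin.ext (by simp)
    rw [hh]
    exact hb i)

lemma step_push [Fintype (EQ m nn k)] (v : VtxT m nn k) (c : ZMod m → Fin (k+2))
    (hap : Aper (pushP v c)) :
    Step srcQ tgtQ (Finset.univ : Finset (EQ m nn k))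
      (Quotient.mk _ v) (Quotient.mk _ (pushV v c)) :=
  ⟨Quotient.mk _ ⟨pushP v c, hap⟩, Finset.mem_univ _,
    Or.inl ⟨(srcQ_mk (⟨pushP v c, hap⟩ : ApWord m (RowT nn k))).trans
      (congrArg (Quotient.mk _) (srcP_pushP v c)), rfl⟩⟩

def blendL (j : ℕ) (v : VtxT m nn k) : VtxT m nn k := fun i b =>
  if h : b.val < nn - j then ucol i
  else v i ⟨b.val - (nn - j), lt_of_le_of_lt (Nat.sub_le _ _) b.isLt⟩

lemma blendL_zero (v : VtxT m nn k) : blendL 0 v = vu := by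
  funext i b
  exact dif_pos (by have := b.isLt; omega)

lemma blendL_nn (v : VtxT m nn k) : blendL nn v = v := by
  funext i b
  simp only [blendL]
  rw [dif_neg (by omega)]
  exact congrArg (v i) (Fin.ext (by simp))

lemma pushV_blendL (v : VtxT m nn k) (j : ℕ) (hj : j < nn) :
    pushV (blendL j v) (fun i => v i ⟨j, hj⟩) = blendL (j+1) v := by
  funext i b
  simp only [pushV, tgtP, pushP, blendL]
  by_cases h1 : (b.succ : Fin (nn+1)).val < nn
  · rw [dif_pos h1]
    have hsv : (b.succ : Fin (nn+1)).val = b.val + 1 := Fin.val_succ b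
    by_cases h2 : b.val + 1 < nn - j
    · rw [dif_pos (by omega), dif_pos (by omega)]
    · rw [dif_neg (by omega), dif_neg (by omega)]
      exact congrArg (v i) (Fin.ext (by simp [hsv]; omega))
  · rw [dif_neg h1]
    have hsv : (b.succ : Fin (nn+1)).val = b.val + 1 := Fin.val_succ b
    have hbv : b.val = nn - 1 := by have := b.isLt; omega
    rw [dif_neg (by omega)]
    exact congrArg (v i) (Fin.ext (by simp; omega))

def blendR (j : ℕ) (v : VtxT m nn k) : VtxT m nn k := fun i b =>
  if h : b.val + j < nn then v i ⟨b.val + j, h⟩ else ucol i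

lemma blendR_zero (v : VtxT m nn k) : blendR 0 v = v := by
  funext i b
  simp only [blendR]
  rw [dif_pos (by have := b.isLt; omega)]
  exact congrArg (v i) (Fin.ext (by simp))

lemma blendR_nn (v : VtxT m nn k) : blendR nn v = vu := by
  funext i b
  exact dif_neg (by omega)

lemma pushV_blendR (v : VtxT m nn k) (j : ℕ) :
    pushV (blendR j v) ucol = blendR (j+1) v := by
  funext i b
  simp only [pushV, tgtP, pushP, blendR]
  have hsv : (b.succ : Fin (nn+1)).val = b.val + 1 := Fin.val_succ b
  by_cases h1 : (b.succ : Fin (nn+1)).val < nn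
  · rw [dif_pos h1]
    by_cases h2 : b.val + 1 + j < nn
    · rw [dif_pos (by omega), dif_pos (by omega)]
      exact congrArg (v i) (Fin.ext (by simp [hsv]; omega))
    · rw [dif_neg (by omega), dif_neg (by omega)]
  · rw [dif_neg h1, dif_neg (by omega)]

lemma conn_vu_to [Fintype (EQ m nn k)] (v : VtxT m nn k) :
    Conn srcQ tgtQ (Finset.univ : Finset (EQ m nn k))
      (Quotient.mk _ (vu : VtxT m nn k)) (Quotient.mk _ v) := by
  have aux : ∀ j, j ≤ nn → Conn srcQ tgtQ (Finset.univ : Finset (EQ m nn k))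
      (Quotient.mk _ (vu : VtxT m nn k)) (Quotient.mk _ (blendL j v)) := by
    intro j
    induction j with
    | zero =>
      intro _
      rw [blendL_zero]
      exact Relation.ReflTransGen.refl
    | succ j ih =>
      intro hj
      have hjn : j < nn := by omega
      refine Relation.ReflTransGen.tail (ih (by omega)) ?_
      have hap : Aper (pushP (blendL j v) (fun i => v i ⟨j, hjn⟩)) :=
        aper_pushP_of_ucol_col _ _ ⟨0, by omega⟩ (fun i => by
          simp only [blendL]
          rw [dif_pos (by omega)])
      have := step_push (blendL j v) (fun i => v i ⟨j, hjn⟩) hap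
      rwa [pushV_blendL v j hjn] at this
  have := aux nn le_rfl
  rwa [blendL_nn] at this

lemma conn_to_vu [Fintype (EQ m nn k)] (v : VtxT m nn k) :
    Conn srcQ tgtQ (Finset.univ : Finset (EQ m nn k))
      (Quotient.mk _ v) (Quotient.mk _ (vu : VtxT m nn k)) := by
  have aux : ∀ j, j ≤ nn → Conn srcQ tgtQ (Finset.univ : Finset (EQ m nn k))
      (Quotient.mk _ v) (Quotient.mk _ (blendR j v)) := by
    intro j
    induction j with
    | zero =>
      intro _
      rw [blendR_zero]
      exact Relation.ReflTransGen.refl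
    | succ j ih =>
      intro hj
      refine Relation.ReflTransGen.tail (ih (by omega)) ?_
      have := step_push (blendR j v) ucol (aper_pushP_ucol _)
      rwa [pushV_blendR v j] at this
  have := aux nn le_rfl
  rwa [blendR_nn] at this

lemma ring_connected [Fintype (EQ m nn k)] :
    ∀ ee ∈ (Finset.univ : Finset (EQ m nn k)),
      Conn srcQ tgtQ (Finset.univ : Finset (EQ m nn k))
        (Quotient.mk _ (vtx0 : VtxT m nn k)) (srcQ ee) := by
  intro ee _
  induction ee using Quotient.inductionOn with
  | h w =>
    rw [srcQ_mk]
    exact Relation.ReflTransGen.trans (conn_to_vu vtx0) (conn_vu_to (srcP w.val))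

lemma card_EQ : Nat.card (EQ m nn k) = necklaceNat ((k+2)^(nn+1)) m := by
  classical
  have h := card_neckQ (RowT nn k) (m := m)
  rw [show Fintype.card (RowT nn k) = (k+2)^(nn+1) from by
    rw [Fintype.card_fun]; simp] at h
  exact h

end Ring3
end DBR
open DBR in
theorem deBruijnRing_exists (m n k : ℕ) (hm : 2 ≤ m) (hn : 2 ≤ n) (hk : 2 ≤ k) :
    ∃ A : ZMod m → ZMod (necklaceNat (k ^ n) m) → Fin k,
      IsSubPerfectMap m (necklaceNat (k ^ n) m) m n A ∧
      (∀ P : Fin m → Fin n → Fin k, RowAperiodic P →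
        ∃! p : ZMod m × ZMod (necklaceNat (k ^ n) m),
          ∀ (a : Fin m) (b : Fin n), A (p.1 + (a : ℕ)) (p.2 + (b : ℕ)) = P a b) ∧
      (∀ (N' : ℕ) (A' : ZMod m → ZMod N' → Fin k),
        1 ≤ N' → IsSubPerfectMap m N' m n A' → N' ≤ necklaceNat (k ^ n) m) := by
  classical
  obtain ⟨nn, rfl⟩ : ∃ nn, n = nn + 1 := ⟨n - 1, by omega⟩
  obtain ⟨k2, rfl⟩ : ∃ k2, k = k2 + 2 := ⟨k - 2, by omega⟩
  haveI : NeZero m := ⟨by omega⟩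
  haveI instAW : Fintype (ApWord m (RowT nn k2)) := by
    unfold ApWord; infer_instance
  haveI instEQ : Fintype (EQ m nn k2) := by
    unfold EQ NeckQ; exact Quotient.fintype _
  haveI instEQd : DecidableEq (EQ m nn k2) := Classical.decEq _
  haveI instVQd : DecidableEq (VQ m nn k2) := Classical.decEq _
  set L := necklaceNat ((k2 + 2) ^ (nn + 1)) m with hLdef
  have hcard : Nat.card (EQ m nn k2) = L := card_EQ
  -- a canonical aperiodic pattern
  have e0 : ApWord m (RowT nn k2) := ⟨pushP vtx0 ucol, aper_pushP_ucol _⟩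
  have hL1 : 1 ≤ L := by
    rw [← hcard]
    haveI : Nonempty (EQ m nn k2) := ⟨Quotient.mk _ e0⟩
    exact Nat.card_pos
  haveI : NeZero L := ⟨by omega⟩
  -- Euler circuit
  obtain ⟨l, hwalk, hnodup, hcover⟩ :=
    euler_circuit srcQ tgtQ (Quotient.mk _ (vtx0 : VtxT m nn k2))
      ring_balanced ring_connected
  have hluniv : l.toFinset = Finset.univ :=
    Finset.eq_univ_iff_forall.mpr (fun e => List.mem_toFinset.mpr ((hcover e).mpr (Finset.mem_univ e)))
  have hlen : l.length = L := by
    rw [← List.toFinset_card_of_nodup hnodup, hluniv, Finset.card_univ,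
      ← Nat.card_eq_fintype_card, hcard]
  set d0 : EQ m nn k2 := Quotient.mk _ e0 with hd0
  set edge : ℕ → EQ m nn k2 := fun j => l.getD j d0 with hedge
  have edge_inj : ∀ j j', j < L → j' < L → edge j = edge j' → j = j' := by
    intro j j' hj hj' he
    rw [hedge] at he
    simp only [List.getD_eq_getElem?_getD] at he
    rw [List.getElem?_eq_getElem (by omega), List.getElem?_eq_getElem (by omega)] at he
    simp only [Option.getD_some] at he
    exact Fin.mk.inj_iff.mp (List.nodup_iff_injective_get.mp hnodup he)
  -- lifting the circuit
  set pick : VtxT m nn k2 → EQ m nn k2 → ApWord m (RowT nn k2) := fun prev ee =>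
    if h : ∃ t : ZMod m, rotw t (srcP ee.out.val) = prev then rotA h.choose ee.out
    else ee.out with hpick
  have pick_spec : ∀ (prev : VtxT m nn k2) (ee : EQ m nn k2),
      srcQ ee = Quotient.mk _ prev →
      Quotient.mk (rotSetoid m (RowT nn k2)) (pick prev ee) = ee ∧
        srcP (pick prev ee).val = prev := by
    intro prev ee hyp
    have h1 : srcQ ee = Quotient.mk _ (srcP ee.out.val) := by
      conv_lhs => rw [← Quotient.out_eq ee]
      rfl
    rw [h1] at hyp
    have hex : ∃ t : ZMod m, rotw t (srcP ee.out.val) = prev := Quotient.exact hyp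
    rw [hpick]
    simp only [dif_pos hex]
    constructor
    · have hrel : (rotSetoid m (RowT nn k2)).r ee.out (rotA hex.choose ee.out) :=
        ⟨hex.choose, rfl⟩
      rw [show Quotient.mk (rotSetoid m (RowT nn k2)) (rotA hex.choose ee.out)
          = Quotient.mk _ ee.out from (Quotient.sound hrel).symm]
      exact Quotient.out_eq (s := rotSetoid m (RowT nn k2)) ee
    · rw [show srcP (rotA hex.choose ee.out).val = rotw hex.choose (srcP ee.out.val) from rfl]
      exact hex.choose_spec
  set F : ℕ → ApWord m (RowT nn k2) := fun j =>
    Nat.rec (pick vtx0 (edge 0)) (fun i prev => pick (tgtP prev.val) (edge (i+1))) j with hF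
  have hF0 : F 0 = pick vtx0 (edge 0) := rfl
  have hFsucc : ∀ j, F (j+1) = pick (tgtP (F j).val) (edge (j+1)) := fun j => rfl
  have Hinv : ∀ j, j < L →
      Quotient.mk (rotSetoid m (RowT nn k2)) (F j) = edge j ∧
        srcP (F j).val = (if j = 0 then vtx0 else tgtP (F (j-1)).val) := by
    intro j
    induction j with
    | zero =>
      intro _
      have hsrc0 : srcQ (edge 0) = Quotient.mk _ (vtx0 : VtxT m nn k2) :=
        walk_src_getD srcQ tgtQ d0 hwalk (by omega)
      obtain ⟨h1, h2⟩ := pick_spec vtx0 (edge 0) hsrc0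
      exact ⟨h1, by rw [if_pos rfl]; exact h2⟩
    | succ j ih =>
      intro hj
      obtain ⟨ih1, _⟩ := ih (by omega)
      have hchain : tgtQ (edge j) = srcQ (edge (j+1)) :=
        walk_getD_chain srcQ tgtQ d0 hwalk j (by omega)
      have hsrc : srcQ (edge (j+1)) = Quotient.mk _ (tgtP (F j).val) := by
        rw [← hchain, ← ih1]
        rfl
      obtain ⟨h1, h2⟩ := pick_spec (tgtP (F j).val) (edge (j+1)) hsrc
      rw [hFsucc j]
      exact ⟨h1, by simpa using h2⟩
  have hclose : tgtP (F (L-1)).val = vtx0 := by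
    have h1 : tgtQ (edge (L-1)) = Quotient.mk _ (vtx0 : VtxT m nn k2) :=
      walk_tgt_getD srcQ tgtQ d0 hwalk (L-1) (by omega)
    have h2 : Quotient.mk (rotSetoid m (RowT nn k2)) (F (L-1)) = edge (L-1) :=
      (Hinv (L-1) (by omega)).1
    have h3 : tgtQ (edge (L-1)) = Quotient.mk _ (tgtP (F (L-1)).val) := by
      rw [← h2]; rfl
    rw [h3] at h1
    obtain ⟨t, ht⟩ := Quotient.exact h1
    have h4 : ∀ s : ZMod m, rotw s (vtx0 : VtxT m nn k2) = vtx0 := fun s => rfl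
    have := congrArg (rotw (-t)) ht
    rw [rotw_rotw, neg_add_cancel, rotw_zero, h4] at this
    exact this
  set EE : ZMod L → ApWord m (RowT nn k2) := fun j => F j.val with hEE
  have overlap : ∀ j : ZMod L, srcP (EE (j+1)).val = tgtP (EE j).val := by
    intro j
    have hjlt : j.val < L := ZMod.val_lt j
    by_cases hj : j.val + 1 < L
    · have hLge : 2 ≤ L := by omega
      haveI : Fact (1 < L) := ⟨by omega⟩
      have hval : (j + 1 : ZMod L).val = j.val + 1 := by
        rw [ZMod.val_add, ZMod.val_one, Nat.mod_eq_of_lt (by omega)]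
      rw [hEE]
      simp only [hval]
      have := (Hinv (j.val + 1) hj).2
      rw [if_neg (by omega)] at this
      simpa using this
    · have hjeq : j.val = L - 1 := by omega
      have hj1 : (j + 1 : ZMod L) = 0 := by
        have : j = ((L - 1 : ℕ) : ZMod L) := by
          conv_lhs => rw [← ZMod.natCast_rightInverse j]
          rw [hjeq]
        have h5 : ((L - 1 : ℕ) : ZMod L) + ((1 : ℕ) : ZMod L) = ((L : ℕ) : ZMod L) := by
          rw [← Nat.cast_add]
          congr 1
          omega
        rw [this, show (1 : ZMod L) = ((1 : ℕ) : ZMod L) from (@Nat.cast_one (ZMod L) _).symm,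
          h5, ZMod.natCast_self]
      rw [hEE]
      simp only [hj1, hjeq, ZMod.val_zero]
      have h0 := (Hinv 0 (by omega)).2
      rw [if_pos rfl] at h0
      rw [h0, hclose]
  -- the array
  set A : ZMod m → ZMod L → Fin (k2+2) :=
    fun i j => (EE j).val i ⟨0, Nat.succ_pos nn⟩ with hA
  have W1 : ∀ (t : ℕ), t ≤ nn → ∀ (j : ZMod L) (i : ZMod m) (c : Fin (nn+1))
      (hc : c.val + t ≤ nn),
      (EE (j + (t : ZMod L))).val i c = (EE j).val i ⟨c.val + t, by omega⟩ := by
    intro t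
    induction t with
    | zero =>
      intro _ j i c hc
      rw [Nat.cast_zero, add_zero]
      exact congrArg ((EE j).val i) (Fin.ext (by simp))
    | succ t ih =>
      intro ht j i c hc
      have hc' : c.val < nn := by omega
      set c' : Fin nn := ⟨c.val, hc'⟩ with hc'def
      have hcast : c = c'.castSucc := Fin.ext (by simp [hc'def])
      have hj1 : (((t+1 : ℕ)) : ZMod L) = ((t : ℕ) : ZMod L) + 1 := by push_cast; ring
      have hov := overlap (j + (t : ZMod L))
      have hov2 := congrFun (congrFun hov i) c'
      simp only [srcP, tgtP] at hov2
      calc (EE (j + ((t+1 : ℕ) : ZMod L))).val i c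
          = (EE (j + (t : ZMod L) + 1)).val i c'.castSucc := by
            rw [hj1, ← add_assoc, ← hcast]
        _ = (EE (j + (t : ZMod L))).val i c'.succ := hov2
        _ = (EE j).val i ⟨c'.succ.val + t, by simp [Fin.val_succ, hc'def]; omega⟩ := by
            exact ih (by omega) j i c'.succ (by simp [Fin.val_succ, hc'def]; omega)
        _ = (EE j).val i ⟨c.val + (t+1), by omega⟩ := by
            exact congrArg ((EE j).val i) (Fin.ext (by simp [Fin.val_succ, hc'def]; omega))
  have window : ∀ (p : ZMod m × ZMod L) (a : Fin m) (b : Fin (nn+1)),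
      A (p.1 + (a : ℕ)) (p.2 + (b : ℕ)) = (EE p.2).val (p.1 + (a : ℕ)) b := by
    intro p a b
    have hW := W1 b.val (by omega) p.2 (p.1 + (a : ℕ)) ⟨0, Nat.succ_pos nn⟩ (by simp; omega)
    show (EE (p.2 + ((b : ℕ) : ZMod L))).val (p.1 + (a : ℕ)) ⟨0, Nat.succ_pos nn⟩
      = (EE p.2).val (p.1 + (a : ℕ)) b
    rw [hW]
    exact congrArg ((EE p.2).val _) (Fin.ext (by simp))
  -- key: window patterns determine positions
  have subperf : IsSubPerfectMap m L m (nn+1) A := by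
    intro p q hpq
    have hrot : rotw p.1 (EE p.2).val = rotw q.1 (EE q.2).val := by
      funext i b
      have ha : ((⟨i.val, ZMod.val_lt i⟩ : Fin m) : ℕ) = i.val := rfl
      have hi : ((i.val : ℕ) : ZMod m) = i := ZMod.natCast_rightInverse i
      have h1 := hpq ⟨i.val, ZMod.val_lt i⟩ b
      rw [window p, window q] at h1
      show (EE p.2).val (i + p.1) b = (EE q.2).val (i + q.1) b
      rw [show i + p.1 = p.1 + ((i.val : ℕ) : ZMod m) from by rw [hi]; ring,
        show i + q.1 = q.1 + ((i.val : ℕ) : ZMod m) from by rw [hi]; ring]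
      exact h1
    have hqe : Quotient.mk (rotSetoid m (RowT nn k2)) (EE p.2) = Quotient.mk _ (EE q.2) := by
      apply Quotient.sound
      refine ⟨-q.1 + p.1, ?_⟩
      have := congrArg (rotw (-q.1)) hrot
      rwa [rotw_rotw, rotw_rotw, neg_add_cancel, rotw_zero] at this
    have hje : p.2 = q.2 := by
      have h1 : edge p.2.val = edge q.2.val := by
        rw [← (Hinv p.2.val (ZMod.val_lt p.2)).1, ← (Hinv q.2.val (ZMod.val_lt q.2)).1]
        exact hqe
      have h2 : p.2.val = q.2.val :=
        edge_inj _ _ (ZMod.val_lt p.2) (ZMod.val_lt q.2) h1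
      rw [← ZMod.natCast_rightInverse p.2, ← ZMod.natCast_rightInverse q.2, h2]
    rw [hje] at hrot
    have hte : p.1 = q.1 := by
      by_contra hne
      apply (EE q.2).prop (-q.1 + p.1)
        (fun h0 => hne (by
          have := congrArg (· + q.1) h0
          simpa using this))
      have := congrArg (rotw (-q.1)) hrot
      rwa [rotw_rotw, rotw_rotw, neg_add_cancel, rotw_zero] at this
    exact Prod.ext hte hje
  refine ⟨A, subperf, ?_, ?_⟩
  · -- every row-aperiodic pattern occurs exactly once
    intro P hP
    set x : PatT m nn k2 := fun i => P ⟨i.val, ZMod.val_lt i⟩ with hx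
    have hxfin : ∀ a : Fin m, x ((a : ℕ) : ZMod m) = P a := by
      intro a
      rw [hx]
      exact congrArg P (Fin.ext (by
        simp [ZMod.val_natCast, Nat.mod_eq_of_lt a.isLt]))
    have hxa : Aper x := by
      intro t ht hrot
      set r : Fin m := ⟨t.val, ZMod.val_lt t⟩ with hr
      refine hP r (by
        simp only [hr]
        exact fun h0 => ht ((ZMod.val_eq_zero t).mp h0)) ?_
      funext a
      have h1 := congrFun hrot ((a : ℕ) : ZMod m)
      simp only [rotw] at h1
      rw [hxfin a] at h1
      have h2 : ((a : ℕ) : ZMod m) + t = (((a + r : Fin m) : ℕ) : ZMod m) := by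
        have : ((a + r : Fin m) : ℕ) = ((a : ℕ) + (r : ℕ)) % m := Fin.val_add a r
        rw [this, ZMod.natCast_mod, Nat.cast_add]
        rw [show ((r : ℕ) : ZMod m) = t from by
          simp only [hr]; exact ZMod.natCast_rightInverse t]
      rw [h2, hxfin (a + r)] at h1
      show vrot r P a = P a
      exact h1
    have hmem : (Quotient.mk (rotSetoid m (RowT nn k2)) ⟨x, hxa⟩ : EQ m nn k2) ∈ l :=
      (hcover _).mpr (Finset.mem_univ _)
    obtain ⟨jf, hjf⟩ := List.mem_iff_get.mp hmem
    set jz : ZMod L := ((jf : ℕ) : ZMod L) with hjz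
    have hjzv : jz.val = (jf : ℕ) := by
      rw [hjz, ZMod.val_natCast, Nat.mod_eq_of_lt (by rw [← hlen]; exact jf.isLt)]
    have hedgejz : edge jz.val = Quotient.mk _ (⟨x, hxa⟩ : ApWord m (RowT nn k2)) := by
      rw [hjzv, hedge]
      simp only [List.getD_eq_getElem?_getD]
      rw [List.getElem?_eq_getElem (show (jf : ℕ) < l.length from jf.isLt)]
      simp only [Option.getD_some]
      exact hjf
    have hEEj : Quotient.mk (rotSetoid m (RowT nn k2)) (EE jz)
        = Quotient.mk _ (⟨x, hxa⟩ : ApWord m (RowT nn k2)) := by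
      rw [← hedgejz]
      exact (Hinv jz.val (ZMod.val_lt jz)).1
    obtain ⟨t, htx⟩ := Quotient.exact hEEj
    refine ⟨(t, jz), ?_, ?_⟩
    · intro a b
      rw [window (t, jz) a b]
      have h1 := congrFun htx (((a : ℕ) : ZMod m))
      simp only [rotw] at h1
      show (EE jz).val (t + ((a : ℕ) : ZMod m)) b = P a b
      rw [add_comm t]
      rw [show (EE jz).val (((a : ℕ) : ZMod m) + t) = x ((a : ℕ) : ZMod m) from h1]
      rw [hxfin a]
    · rintro q hq
      apply subperf q (t, jz)
      intro a b
      rw [hq a b]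
      have : A ((t, jz).1 + (a : ℕ)) ((t, jz).2 + (b : ℕ)) = P a b := by
        rw [window (t, jz) a b]
        have h1 := congrFun htx (((a : ℕ) : ZMod m))
        simp only [rotw] at h1
        show (EE jz).val (t + ((a : ℕ) : ZMod m)) b = P a b
        rw [add_comm t]
        rw [show (EE jz).val (((a : ℕ) : ZMod m) + t) = x ((a : ℕ) : ZMod m) from h1]
        rw [hxfin a]
      rw [this]
  · -- maximality
    intro N' A' hN' hA'
    haveI : NeZero N' := ⟨by omega⟩
    set g : ZMod N' → PatT m nn k2 := fun j => fun i b => A' i (j + (b : ℕ)) with hg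
    have hga : ∀ j, Aper (g j) := by
      intro j t ht hrot
      have h1 : ((t, j) : ZMod m × ZMod N') = ((0 : ZMod m), j) := by
        apply hA'
        intro a b
        have h2 := congrFun (congrFun hrot ((a : ℕ) : ZMod m)) b
        simp only [rotw, hg] at h2
        show A' (t + (a:ℕ)) (j + (b:ℕ)) = A' ((0:ZMod m) + (a:ℕ)) (j + (b:ℕ))
        rw [add_comm t, zero_add]
        exact h2
      exact ht (congrArg Prod.fst h1)
    set G : ZMod N' → EQ m nn k2 :=
      fun j => Quotient.mk (rotSetoid m (RowT nn k2)) ⟨g j, hga j⟩ with hG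
    have hGinj : Function.Injective G := by
      intro j j' hjj
      obtain ⟨t, ht⟩ := Quotient.exact hjj
      have h1 : ((t, j) : ZMod m × ZMod N') = ((0 : ZMod m), j') := by
        apply hA'
        intro a b
        have h2 := congrFun (congrFun ht ((a : ℕ) : ZMod m)) b
        simp only [rotw, hg] at h2
        show A' (t + (a:ℕ)) (j + (b:ℕ)) = A' ((0:ZMod m) + (a:ℕ)) (j' + (b:ℕ))
        rw [add_comm t, zero_add]
        exact h2
      exact congrArg Prod.snd h1
    have := Nat.card_le_card_of_injective G hGinj
    rwa [Nat.card_zmod, hcard] at this
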